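/- Let w be an infinite word avoiding k-th powers (k ≥ 2) and let N ≥ 1. For every position i, the number of nonempty palindromes of the form w[i..j] with length at most N is at most 1 + log_{k/(k−1)} N. -/

import Mathlib

/-- `wpow u k` is the `k`-fold concatenation of the word `u`. -/
def wpow {A : Type*} (u : List A) (k : ℕ) : List A :=
  (List.replicate k u).flatten

/-- The factor `w[i..j]` (inclusive) of the infinite word `w`. -/
def wseg {A : Type*} (w : ℕ → A) (i j : ℕ) : List A :=
  (List.range (j + 1 - i)).map (fun t => w (i + t))

/-- `w` avoids `k`-th powers: no factor of `w` is of the form `u^k` with `u` nonempty. -/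
def AvoidsPower {A : Type*} (w : ℕ → A) (k : ℕ) : Prop :=
  ∀ u : List A, u ≠ [] → ∀ i : ℕ, wpow u k ≠ wseg w i (i + (wpow u k).length - 1)

lemma wseg_eq {A : Type*} (w : ℕ → A) (i n : ℕ) (hn : 1 ≤ n) :
    wseg w i (i + n - 1) = (List.range n).map (fun t => w (i + t)) := by
  unfold wseg; congr 2; omega

/-- Palindrome of a range-map: entrywise symmetry. -/
lemma pal_apply {A : Type*} (f : ℕ → A) (n : ℕ)
    (h : ((List.range n).map f).Palindrome) {t : ℕ} (ht : t < n) :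
    f t = f (n - 1 - t) := by
  have hlen : ((List.range n).map f).length = n := by simp
  have h1 : ((List.range n).map f).reverse[t]? = ((List.range n).map f)[t]? := by
    rw [h.reverse_eq]
  rw [List.getElem?_reverse (by simpa [hlen])] at h1
  have hn0 : n - 1 - t < n := by omega
  simp only [hlen, List.getElem?_map, List.getElem?_range, ht, hn0, if_pos,
    List.getElem?_eq_getElem, List.getElem_map, List.getElem_range, Option.map_some] at h1
  exact (Option.some_injective _ h1).symm

lemma wpow_mod {A : Type*} (f : ℕ → A) (d : ℕ) (m : ℕ) :
    wpow ((List.range d).map f) m = (List.range (m * d)).map (fun s => f (s % d)) := by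
  induction m with
  | zero => simp [wpow]
  | succ m ih =>
    have h1 : (m + 1) * d = d + m * d := by ring
    rw [h1, List.range_add, List.map_append]
    unfold wpow at *
    have hjc : (List.map f (List.range d) :: List.replicate m (List.map f (List.range d))).flatten
        = List.map f (List.range d) ++ (List.replicate m (List.map f (List.range d))).flatten := rfl
    rw [List.replicate_succ, hjc, ih]
    congr 1
    · apply List.map_congr_left
      intro a ha
      rw [List.mem_range] at ha
      rw [Nat.mod_eq_of_lt ha]
    · rw [List.map_map]
      apply List.map_congr_left
      intro a _
      simp [Nat.add_mod_left]

/-- Key lemma: two palindromes starting at the same position. -/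
lemma ratio_lemma {A : Type*} (w : ℕ → A) (k : ℕ) (hk : 2 ≤ k) (hw : AvoidsPower w k)
    (i p q : ℕ) (hp : 1 ≤ p) (hpq : p < q)
    (hu : (wseg w i (i + p - 1)).Palindrome)
    (hv : (wseg w i (i + q - 1)).Palindrome) :
    k * p < (k - 1) * q := by
  set d := q - p with hd
  have hd1 : 1 ≤ d := by omega
  rw [wseg_eq w i p hp] at hu
  rw [wseg_eq w i q (by omega)] at hv
  -- periodicity with period d
  have hper : ∀ t, t + d < q → w (i + t) = w (i + (t + d)) := by
    intro t htd
    have htp : t < p := by omega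
    have h1 := pal_apply _ q hv (show t + d < q from htd)
    have h2 := pal_apply _ p hu (show p - 1 - t < p by omega)
    have e1 : q - 1 - (t + d) = p - 1 - t := by omega
    have e2 : p - 1 - (p - 1 - t) = t := by omega
    rw [e1] at h1
    rw [e2] at h2
    rw [h1, ← h2]
  have hmod : ∀ s, s < q → w (i + s) = w (i + s % d) := by
    intro s
    induction s using Nat.strong_induction_on with
    | _ s ih =>
      intro hs
      by_cases hsd : s < d
      · rw [Nat.mod_eq_of_lt hsd]
      · push_neg at hsd
        have h1 : w (i + (s - d)) = w (i + (s - d + d)) := hper (s - d) (by omega)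
        have h2 : s - d + d = s := by omega
        rw [h2] at h1
        rw [← h1, ih (s - d) (by omega) (by omega), Nat.mod_eq_sub_mod hsd]
  -- avoid the k-th power
  have hq : q < k * d := by
    by_contra hc
    push_neg at hc
    have hne : ((List.range d).map (fun t => w (i + t))) ≠ [] := by
      simp [List.map_eq_nil_iff, List.range_eq_nil]; omega
    have hA : wpow ((List.range d).map (fun t => w (i + t))) k
        = (List.range (k * d)).map (fun s => w (i + s % d)) := wpow_mod _ d k
    have hlen : (wpow ((List.range d).map (fun t => w (i + t))) k).length = k * d := by
      rw [hA]; simp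
    have hB : wseg w i (i + k * d - 1) = (List.range (k * d)).map (fun s => w (i + s)) :=
      wseg_eq w i (k * d) (by nlinarith)
    have hC : (List.range (k * d)).map (fun s => w (i + s % d))
        = (List.range (k * d)).map (fun s => w (i + s)) := by
      apply List.map_congr_left
      intro s hs
      rw [List.mem_range] at hs
      exact (hmod s (by omega)).symm
    have := hw ((List.range d).map (fun t => w (i + t))) hne i
    rw [hlen, hA, hB] at this
    exact this hC
  -- conclude
  obtain ⟨m, rfl⟩ : ∃ m, k = m + 2 := ⟨k - 2, by omega⟩
  have hmm : m + 2 - 1 = m + 1 := rfl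
  rw [hmm]
  have hdq : d ≤ q := by omega
  zify [hpq.le, hd] at hq ⊢
  nlinarith

theorem count_palindromes_from_position {A : Type*} (w : ℕ → A) (k : ℕ)
    (hk : 2 ≤ k) (hw : AvoidsPower w k) (N : ℕ) (hN : 1 ≤ N) (i : ℕ) :
    (Set.ncard {j : ℕ | i ≤ j ∧ j + 1 - i ≤ N ∧ (wseg w i j).Palindrome} : ℝ)
      ≤ 1 + Real.logb ((k : ℝ) / ((k : ℝ) - 1)) N := by
  set r : ℝ := (k : ℝ) / ((k : ℝ) - 1) with hr
  have hk1 : (1 : ℝ) ≤ (k : ℝ) - 1 := by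
    have : (2 : ℝ) ≤ (k : ℝ) := by exact_mod_cast hk
    linarith
  have hrgt : 1 < r := by
    rw [hr, lt_div_iff₀ (by linarith)]
    linarith
  have hr0 : 0 < r := by linarith
  set S := {j : ℕ | i ≤ j ∧ j + 1 - i ≤ N ∧ (wseg w i j).Palindrome} with hS
  have hsub : S ⊆ Set.Icc i (i + N) := by
    intro j hj
    exact ⟨hj.1, by have := hj.2.1; omega⟩
  have hfin : S.Finite := Set.Finite.subset (Set.finite_Icc _ _) hsub
  set s : Finset ℕ := hfin.toFinset with hs
  have hcard : S.ncard = s.card := Set.ncard_eq_toFinset_card S hfin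
  have hmem : ∀ j ∈ s, i ≤ j ∧ j + 1 - i ≤ N ∧ (wseg w i j).Palindrome := by
    intro j hj
    rw [hs, Set.Finite.mem_toFinset] at hj
    exact hj
  rcases Nat.eq_zero_or_pos s.card with h0 | hpos
  · rw [hcard, h0]
    have : (0 : ℝ) ≤ Real.logb r N := Real.logb_nonneg hrgt (by exact_mod_cast hN)
    push_cast
    linarith
  · set m := s.card with hm
    set e := s.orderEmbOfFin (rfl : s.card = m) with he
    -- the key growth claim
    have key : ∀ t, (ht : t < m) → r ^ t ≤ ((e ⟨t, ht⟩ : ℕ) + 1 - i : ℕ) := by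
      intro t
      induction t with
      | zero =>
        intro ht
        have hj1 : i ≤ (e ⟨0, ht⟩ : ℕ) := (hmem _ (Finset.orderEmbOfFin_mem s rfl ⟨0, ht⟩)).1
        have h2 : 1 ≤ (e ⟨0, ht⟩ : ℕ) + 1 - i := by omega
        simp only [pow_zero]
        exact_mod_cast h2
      | succ t ih =>
        intro ht
        have ht' : t < m := by omega
        set j1 := (e ⟨t, ht'⟩ : ℕ) with hj1
        set j2 := (e ⟨t + 1, ht⟩ : ℕ) with hj2
        have hj1m : i ≤ j1 ∧ j1 + 1 - i ≤ N ∧ (wseg w i j1).Palindrome :=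
          hmem _ (Finset.orderEmbOfFin_mem s rfl ⟨t, ht'⟩)
        have hj2m : i ≤ j2 ∧ j2 + 1 - i ≤ N ∧ (wseg w i j2).Palindrome :=
          hmem _ (Finset.orderEmbOfFin_mem s rfl ⟨t + 1, ht⟩)
        have hlt : j1 < j2 := by
          apply (s.orderEmbOfFin rfl).strictMono
          exact Fin.mk_lt_mk.mpr (by omega)
        set p := j1 + 1 - i with hp
        set q := j2 + 1 - i with hq
        have hp1 : 1 ≤ p := by omega
        have hpq : p < q := by omega
        have hu : (wseg w i (i + p - 1)).Palindrome := by
          have : i + p - 1 = j1 := by omega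
          rw [this]; exact hj1m.2.2
        have hv : (wseg w i (i + q - 1)).Palindrome := by
          have : i + q - 1 = j2 := by omega
          rw [this]; exact hj2m.2.2
        have hratio := ratio_lemma w k hk hw i p q hp1 hpq hu hv
        have hratioR : (k : ℝ) * p ≤ ((k : ℝ) - 1) * q := by
          have h1 : ((k * p : ℕ) : ℝ) ≤ (((k - 1) * q : ℕ) : ℝ) := by
            exact_mod_cast hratio.le
          push_cast [Nat.cast_sub (show 1 ≤ k by omega)] at h1
          linarith [h1]
        have hstep : r * p ≤ q := by
          rw [hr, div_mul_eq_mul_div, div_le_iff₀ (by linarith)]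
          linarith [hratioR]
        calc r ^ (t + 1) = r * r ^ t := by ring
          _ ≤ r * p := by
            apply mul_le_mul_of_nonneg_left _ hr0.le
            exact ih ht'
          _ ≤ q := hstep
    -- apply at t = m - 1
    have hm1 : m - 1 < m := by omega
    have hlast := key (m - 1) hm1
    have hjm : i ≤ (e ⟨m - 1, hm1⟩ : ℕ) ∧ (e ⟨m - 1, hm1⟩ : ℕ) + 1 - i ≤ N ∧
        (wseg w i (e ⟨m - 1, hm1⟩ : ℕ)).Palindrome :=
      hmem _ (Finset.orderEmbOfFin_mem s rfl ⟨m - 1, hm1⟩)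
    have hfin2 : r ^ (m - 1) ≤ (N : ℝ) := by
      refine hlast.trans ?_
      exact_mod_cast hjm.2.1
    have hlogb : ((m : ℝ) - 1) ≤ Real.logb r N := by
      rw [Real.le_logb_iff_rpow_le hrgt (by exact_mod_cast hN)]
      have : r ^ ((m : ℝ) - 1) = r ^ (m - 1 : ℕ) := by
        rw [← Real.rpow_natCast r (m - 1)]
        congr 1
        have : 1 ≤ m := hpos
        push_cast [Nat.cast_sub this]
        ring_nf
      rw [this]
      exact hfin2
    rw [hcard]
    linarith [hlogb]
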